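/- Let g : Ω → [-∞, 0) be a negative plurisubharmonic function on an open set Ω ⊆ ℂⁿ, and let 0 < ε < 1. Then the function -(-g)^{1-ε} is plurisubharmonic on Ω. -/

import Mathlib

open MeasureTheory Metric Filter Topology Complex Real

noncomputable section

/-- `ℂⁿ` as a Euclidean space. -/
abbrev Cn (n : ℕ) := EuclideanSpace ℂ (Fin n)

/-- A point of the circle of radius `r` and direction `v` around `a`. -/
def circPt {n : ℕ} (a : Cn n) (v : Cn n) (r θ : ℝ) : Cn n :=
  a + ((r : ℂ) * Complex.exp (θ * Complex.I)) • v

/-- Plurisubharmonicity for `EReal`-valued functions on `Ω ⊆ ℂⁿ`: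
upper semicontinuity together with the sub-mean value inequality on complex
lines, expressed via truncations `max (f ·) (-m)`. -/
def PshE {n : ℕ} (Ω : Set (Cn n)) (f : Cn n → EReal) : Prop :=
  UpperSemicontinuousOn f Ω ∧
    ∀ m : ℝ, ∀ a ∈ Ω, ∀ v : Cn n, ∀ r : ℝ, 0 < r →
      (∀ θ : ℝ, circPt a v r θ ∈ Ω) →
      (max (f a) ((-m : ℝ) : EReal)).toReal ≤
        (2 * π)⁻¹ * ∫ θ in (0:ℝ)..(2 * π), (max (f (circPt a v r θ)) ((-m : ℝ) : EReal)).toReal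

/-- Plurisubharmonicity for real-valued (e.g. smooth) functions:
the sub-mean value inequality on complex lines. -/
def PshR {n : ℕ} (Ω : Set (Cn n)) (f : Cn n → ℝ) : Prop :=
  ∀ a ∈ Ω, ∀ v : Cn n, ∀ r : ℝ, 0 < r →
    (∀ θ : ℝ, circPt a v r θ ∈ Ω) →
    f a ≤ (2 * π)⁻¹ * ∫ θ in (0:ℝ)..(2 * π), f (circPt a v r θ)

/-- The locus set `L_g` of a function `g` on `Ω`: the points of `Ω` near which `g`
is unbounded below in every neighborhood. -/
def locus {n : ℕ} (Ω : Set (Cn n)) (g : Cn n → EReal) : Set (Cn n) :=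
  {z ∈ Ω | ∀ V ∈ 𝓝 z, ∀ m : ℝ, ∃ w ∈ V ∩ Ω, g w < (m : EReal)}

/-- The pole set `P_g = {g = -∞}` inside `Ω`. -/
def poles {n : ℕ} (Ω : Set (Cn n)) (g : Cn n → EReal) : Set (Cn n) :=
  {z ∈ Ω | g z = ⊥}


noncomputable section

lemma auxH_mono {p : ℝ} (hp : 0 < p) {x y : ℝ} (hy : y ≤ 0) (hxy : x ≤ y) :
    -(-x) ^ p ≤ -(-y) ^ p :=
  neg_le_neg (Real.rpow_le_rpow (by linarith) (by linarith) hp.le)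

lemma auxH_lt_iff {p : ℝ} (hp : 0 < p) {x y : ℝ} (hx : x ≤ 0) (hy : y ≤ 0) :
    -(-x) ^ p < -(-y) ^ p ↔ x < y := by
  constructor
  · intro hlt
    by_contra hyx
    exact absurd (auxH_mono hp hx (not_lt.1 hyx)) (not_le.2 hlt)
  · intro hxy
    exact neg_lt_neg (Real.rpow_lt_rpow (by linarith) (by linarith) hp)

lemma auxH_cont {p : ℝ} (hp : 0 < p) : Continuous fun x : ℝ => -(-x) ^ p := by
  have h1 : Continuous fun y : ℝ => y ^ p :=
    continuous_iff_continuousAt.2 fun y => Real.continuousAt_rpow_const y p (Or.inr hp.le)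
  exact (h1.comp continuous_neg).neg

lemma auxH_convex {p : ℝ} (hp0 : 0 < p) (hp1 : p ≤ 1) :
    ConvexOn ℝ (Set.Iic (0:ℝ)) fun x : ℝ => -(-x) ^ p := by
  refine ⟨convex_Iic 0, fun x hx y hy a b ha hb hab => ?_⟩
  have hcc := (Real.concaveOn_rpow hp0.le hp1).2 (x := -x) (y := -y)
    (Set.mem_Ici.2 (neg_nonneg.2 hx)) (Set.mem_Ici.2 (neg_nonneg.2 hy)) ha hb hab
  have hxy : a • (-x) + b • (-y) = -(a • x + b • y) := by simp only [smul_eq_mul]; ring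
  rw [hxy] at hcc
  simp only [smul_eq_mul] at hcc ⊢
  linarith

lemma auxCoeMax (a b : ℝ) : ((max a b : ℝ) : EReal) = max (a : EReal) (b : EReal) := by
  rcases le_total a b with h | h
  · rw [max_eq_right h, max_eq_right (EReal.coe_le_coe_iff.2 h)]
  · rw [max_eq_left h, max_eq_left (EReal.coe_le_coe_iff.2 h)]

lemma auxBound {x : EReal} (hx : x < 0) {M : ℝ} (hM : 0 ≤ M) :
    (max x ((-M : ℝ) : EReal)).toReal ∈ Set.Icc (-M) 0 := by
  set y := max x ((-M : ℝ) : EReal) with hy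
  have hy1 : ((-M : ℝ) : EReal) ≤ y := le_max_right _ _
  have hy2 : y ≤ ((0 : ℝ) : EReal) := by
    rw [EReal.coe_zero]
    exact max_le hx.le (by exact_mod_cast (by linarith : (-M : ℝ) ≤ 0))
  have hyb : y ≠ ⊥ := fun h => by simp [h] at hy1
  have hyt : y ≠ ⊤ := fun h => by simp [h] at hy2
  constructor
  · have := EReal.toReal_le_toReal hy1 (by simp) hyt
    simpa using this
  · have := EReal.toReal_le_toReal hy2 hyb (by simp)
    simpa using this

lemma auxToRealNeg {x : EReal} (hx : x < 0) (hb : x ≠ ⊥) : x.toReal < 0 := by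
  have ht : x ≠ ⊤ := hx.ne_top
  have : (x.toReal : EReal) < ((0:ℝ) : EReal) := by
    rw [EReal.coe_toReal ht hb, EReal.coe_zero]; exact hx
  exact EReal.coe_lt_coe_iff.1 this

lemma auxKey {p : ℝ} (hp0 : 0 < p) {x : EReal} (hx : x < 0) {M : ℝ} (hM : 0 < M) :
    (max (if x = ⊥ then (⊥ : EReal) else ((-((-x.toReal) ^ p) : ℝ) : EReal))
        ((-(M ^ p) : ℝ) : EReal)).toReal
      = -((-(max x ((-M : ℝ) : EReal)).toReal) ^ p) := by
  have hMp : (0:ℝ) < M ^ p := Real.rpow_pos_of_pos hM p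
  by_cases hb : x = ⊥
  · rw [if_pos hb, hb]
    rw [max_eq_right (bot_le : (⊥:EReal) ≤ _), max_eq_right (bot_le : (⊥:EReal) ≤ _)]
    rw [EReal.toReal_coe, EReal.toReal_coe, neg_neg]
  · rw [if_neg hb]
    have ht : x.toReal < 0 := auxToRealNeg hx hb
    have hxe : (x.toReal : EReal) = x := EReal.coe_toReal hx.ne_top hb
    rw [← hxe, ← auxCoeMax, ← auxCoeMax, EReal.toReal_coe, EReal.toReal_coe, EReal.toReal_coe]
    rcases le_total x.toReal (-M) with h | h
    · rw [max_eq_right h, neg_neg]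
      exact max_eq_right (by simpa using auxH_mono hp0 (by linarith : (-M:ℝ) ≤ 0) h)
    · rw [max_eq_left h]
      exact max_eq_left (by simpa using auxH_mono hp0 ht.le h)

lemma auxLt {p : ℝ} (hp0 : 0 < p) {x : EReal} (hx : x < 0) {c : ℝ} (hc : c < 0) :
    ((if x = ⊥ then (⊥ : EReal) else ((-((-x.toReal) ^ p) : ℝ) : EReal)) < (c : EReal))
      ↔ x < ((-((-c) ^ p⁻¹) : ℝ) : EReal) := by
  set b : ℝ := -((-c) ^ p⁻¹) with hbdef
  have hb0 : b < 0 := by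
    have : (0:ℝ) < (-c) ^ p⁻¹ := Real.rpow_pos_of_pos (by linarith) _
    simp [hbdef]; linarith
  have hhb : -(-b) ^ p = c := by
    rw [hbdef, neg_neg, Real.rpow_inv_rpow (by linarith) hp0.ne', neg_neg]
  by_cases hbb : x = ⊥
  · simp only [hbb, if_pos rfl]
    constructor <;> intro _ <;> exact EReal.bot_lt_coe _
  · rw [if_neg hbb]
    have ht : x.toReal < 0 := auxToRealNeg hx hbb
    rw [EReal.coe_lt_coe_iff, ← hhb, auxH_lt_iff hp0 ht.le hb0.le,
      ← EReal.coe_toReal hx.ne_top hbb, EReal.coe_lt_coe_iff, EReal.toReal_coe]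

/-- If `g` is a negative plurisubharmonic function on an open
set `Ω ⊆ ℂⁿ` and `0 < ε < 1`, then `-(-g)^{1-ε}` (with value `-∞` where
`g = -∞`) is plurisubharmonic on `Ω`. -/
theorem neg_rpow_one_sub_eps_psh {n : ℕ} (Ω : Set (Cn n)) (hΩ : IsOpen Ω)
    (g : Cn n → EReal) (hpsh : PshE Ω g) (hneg : ∀ z ∈ Ω, g z < 0)
    (ε : ℝ) (hε0 : 0 < ε) (hε1 : ε < 1) :
    PshE Ω (fun z => if g z = ⊥ then (⊥ : EReal)
      else ((-((-(g z).toReal) ^ (1 - ε)) : ℝ) : EReal)) := by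
  set p : ℝ := 1 - ε with hpdef
  have hp0 : 0 < p := by simp [hpdef]; linarith
  have hp1 : p ≤ 1 := by simp [hpdef]; linarith
  set u : Cn n → EReal := fun z => if g z = ⊥ then (⊥ : EReal)
      else ((-((-(g z).toReal) ^ p) : ℝ) : EReal) with hudef
  constructor
  · -- upper semicontinuity
    intro z hz y hy
    have hgz : g z < 0 := hneg z hz
    have huz0 : u z < ((0:ℝ) : EReal) := by
      rw [hudef]
      by_cases hb : g z = ⊥
      · simp [hb]
      · simp only [if_neg hb]
        rw [EReal.coe_lt_coe_iff]
        have : (0:ℝ) < (-(g z).toReal) ^ p :=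
          Real.rpow_pos_of_pos (by have := auxToRealNeg hgz hb; linarith) _
        linarith
    have hym : u z < min y ((0:ℝ) : EReal) := lt_min hy huz0
    obtain ⟨c, hc1, hc2⟩ := EReal.exists_between_coe_real hym
    have hc0 : c < 0 := by
      have : (c : EReal) < ((0:ℝ) : EReal) := lt_of_lt_of_le hc2 (min_le_right _ _)
      exact EReal.coe_lt_coe_iff.1 this
    have hcy : (c : EReal) ≤ y := le_of_lt (lt_of_lt_of_le hc2 (min_le_left _ _))
    have hgzb : g z < ((-((-c) ^ p⁻¹) : ℝ) : EReal) := (auxLt hp0 hgz hc0).1 hc1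
    have hev := hpsh.1 z hz _ hgzb
    filter_upwards [hev, self_mem_nhdsWithin] with w hw hwΩ
    exact lt_of_lt_of_le ((auxLt hp0 (hneg w hwΩ) hc0).2 hw) hcy
  · -- mean value inequality
    intro m a ha v r hr hcirc
    rcases le_or_gt m 0 with hm | hm
    · -- trivial case: truncation is constant
      have hconst : ∀ z ∈ Ω, (max (u z) ((-m : ℝ) : EReal)).toReal = -m := by
        intro z hz
        have huz0 : u z < ((0:ℝ) : EReal) := by
          rw [hudef]
          by_cases hb : g z = ⊥
          · simp [hb]
          · simp only [if_neg hb]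
            rw [EReal.coe_lt_coe_iff]
            have : (0:ℝ) < (-(g z).toReal) ^ p :=
              Real.rpow_pos_of_pos (by have := auxToRealNeg (hneg z hz) hb; linarith) _
            linarith
        have h0m : ((0:ℝ) : EReal) ≤ ((-m : ℝ) : EReal) := by
          exact_mod_cast (by linarith : (0:ℝ) ≤ -m)
        rw [max_eq_right (le_of_lt (lt_of_lt_of_le huz0 h0m)), EReal.toReal_coe]
      have h2π : (0:ℝ) < 2 * π := by positivity
      rw [hconst a ha,
        intervalIntegral.integral_congr (g := fun _ => -m)
          (fun θ _ => hconst _ (hcirc θ)),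
        intervalIntegral.integral_const, smul_eq_mul]
      rw [show (2 * π - 0) * (-m) = (2 * π) * (-m) by ring, ← mul_assoc,
        inv_mul_cancel₀ h2π.ne', one_mul]
    · -- main case
      set M : ℝ := m ^ p⁻¹ with hMdef
      have hM : 0 < M := Real.rpow_pos_of_pos hm _
      have hMm : M ^ p = m := Real.rpow_inv_rpow hm.le hp0.ne'
      set G : Cn n → ℝ := fun z => (max (g z) ((-M : ℝ) : EReal)).toReal with hGdef
      have keyEq : ∀ z, z ∈ Ω → (max (u z) ((-m : ℝ) : EReal)).toReal = -((-(G z)) ^ p) := by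
        intro z hz
        have h1 := auxKey hp0 (hneg z hz) hM
        rw [hMm] at h1
        rw [hudef]
        exact h1
      have hGmem : ∀ z ∈ Ω, G z ∈ Set.Icc (-M) 0 := fun z hz =>
        auxBound (hneg z hz) hM.le
      -- the circle map and measurability
      have hcont_circ : Continuous fun θ : ℝ => circPt a v r θ := by
        unfold circPt
        fun_prop
      have husc : UpperSemicontinuous fun θ : ℝ => g (circPt a v r θ) := by
        intro θ y hy
        have h1 := hpsh.1 _ (hcirc θ) y hy
        rw [nhdsWithin_eq_nhds.2 (hΩ.mem_nhds (hcirc θ))] at h1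
        exact hcont_circ.continuousAt.eventually h1
      have hmeasG : Measurable fun θ : ℝ => G (circPt a v r θ) :=
        (husc.measurable.max measurable_const).ereal_toReal
      have h2π : (0:ℝ) < 2 * π := by positivity
      set μ : Measure ℝ := volume.restrict (Set.Ioc (0:ℝ) (2 * π)) with hμdef
      have hμuniv : μ Set.univ = ENNReal.ofReal (2 * π) := by
        rw [hμdef, Measure.restrict_apply_univ, Real.volume_Ioc, sub_zero]
      haveI : IsFiniteMeasure μ := ⟨by rw [hμuniv]; exact ENNReal.ofReal_lt_top⟩
      haveI : NeZero μ := ⟨by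
        intro h0
        rw [← Measure.measure_univ_eq_zero, hμuniv] at h0
        exact absurd h0 (by simp [h2π, Real.pi_pos])⟩
      have hfint : Integrable (fun θ => G (circPt a v r θ)) μ := by
        refine ⟨hmeasG.aestronglyMeasurable, ?_⟩
        apply MeasureTheory.HasFiniteIntegral.of_bounded (C := M)
        filter_upwards with θ
        obtain ⟨h1, h2⟩ := hGmem _ (hcirc θ)
        rw [Real.norm_eq_abs, abs_le]
        exact ⟨h1, by linarith⟩
      have hgint : Integrable (fun θ => -((-(G (circPt a v r θ))) ^ p)) μ := by
        refine ⟨(((auxH_cont hp0).measurable).comp hmeasG).aestronglyMeasurable, ?_⟩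
        apply MeasureTheory.HasFiniteIntegral.of_bounded (C := m)
        filter_upwards with θ
        obtain ⟨h1, h2⟩ := hGmem _ (hcirc θ)
        have hub : -((-(G (circPt a v r θ))) ^ p) ≤ -((-(0:ℝ)) ^ p) := auxH_mono hp0 le_rfl h2
        have hlb : -((-(-M : ℝ)) ^ p) ≤ -((-(G (circPt a v r θ))) ^ p) := auxH_mono hp0 h2 h1
        rw [neg_zero, Real.zero_rpow hp0.ne', neg_zero] at hub
        rw [neg_neg, hMm] at hlb
        rw [Real.norm_eq_abs, abs_le]
        exact ⟨hlb, by linarith⟩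
      -- Jensen's inequality
      have hJ := ((auxH_convex hp0 hp1).subset Set.Icc_subset_Iic_self
          (convex_Icc _ _)).map_average_le (μ := μ)
          (f := fun θ => G (circPt a v r θ))
          ((auxH_cont hp0).continuousOn) isClosed_Icc
          (Filter.Eventually.of_forall fun θ => hGmem _ (hcirc θ)) hfint hgint
      -- averages vs interval integrals
      have havg : ∀ f : ℝ → ℝ, (⨍ x, f x ∂μ) = (2 * π)⁻¹ * ∫ θ in (0:ℝ)..(2 * π), f θ := by
        intro f
        rw [MeasureTheory.average_eq, measureReal_def, hμuniv, ENNReal.toReal_ofReal h2π.le, smul_eq_mul,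
          intervalIntegral.integral_of_le h2π.le]
      rw [havg, havg] at hJ
      -- monotonicity step
      have hGa := hpsh.2 M a ha v r hr hcirc
      have havg0 : (2 * π)⁻¹ * (∫ θ in (0:ℝ)..(2 * π), G (circPt a v r θ)) ≤ 0 := by
        have hint0 : (∫ θ in (0:ℝ)..(2 * π), G (circPt a v r θ)) ≤ 0 := by
          rw [intervalIntegral.integral_of_le h2π.le]
          exact MeasureTheory.integral_nonpos fun θ => (hGmem _ (hcirc θ)).2
        exact mul_nonpos_of_nonneg_of_nonpos (by positivity) hint0
      have hmono := auxH_mono hp0 havg0 hGa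
      rw [keyEq a ha,
        intervalIntegral.integral_congr
          (g := fun θ => -((-(G (circPt a v r θ))) ^ p))
          (fun θ _ => keyEq _ (hcirc θ))]
      calc -((-(G a)) ^ p)
          ≤ -((-((2 * π)⁻¹ * ∫ θ in (0:ℝ)..(2 * π), G (circPt a v r θ))) ^ p) := hmono
        _ ≤ (2 * π)⁻¹ * ∫ θ in (0:ℝ)..(2 * π), -((-(G (circPt a v r θ))) ^ p) := hJ
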